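/- Let n1,n2,α1,α2 ∈ ℂ with n1 ≠ 0 and 2n1n2−3n1−n2−3 = 0, and let a : ℂ → ℂ. Let U ⊆ ℂ be open and let x, y : ℂ → ℂ be differentiable on U with y(t) ≠ 0 for t ∈ U, satisfying the generalized Painlevé IV system with parameters (n1,n2; α1,α2) and coefficient function a(t) on U. Then x̃ := x + α2/y and ỹ := y satisfy the generalized Painlevé IV system on U with parameters (n1,n2; α1+α2−n1α2, −α2) and the same coefficient function a(t). -/

import Mathlib

/-- `x, y : ℂ → ℂ` are differentiable on `U` and satisfy the generalized
Painlevé IV system with parameters `(n1,n2; b1,b2)` and coefficient function `a` on `U`. -/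
def PIVSystem (n1 n2 b1 b2 : ℂ) (a : ℂ → ℂ) (U : Set ℂ) (x y : ℂ → ℂ) : Prop :=
  DifferentiableOn ℂ x U ∧ DifferentiableOn ℂ y U ∧
  ∀ t ∈ U,
    (deriv x t = a t * ((x t) ^ 3 * y t + ((n1 * b2 - b1) / n1) * (x t) ^ 2
      + ((2 * n1 - 1) * t / (3 * n1)) * x t + (n1 + 1) / (6 * n1)))
    ∧
    (deriv y t = a t * (-((2 * n1 - 1) / n1) * (x t) ^ 2 * (y t) ^ 2
      + ((2 * b1 - (3 * n1 - 2) * b2) / n1) * x t * y t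
      - ((2 * n1 - 1) / (3 * n1)) * t * y t
      + b2 * (b1 - (n1 - 1) * b2) / n1))

set_option maxHeartbeats 1000000 in
private lemma piv_aux1 (N A1 A2 T X Y A : ℂ) (hN : N ≠ 0) (hY : Y ≠ 0) :
    A * (X ^ 3 * Y + ((N * A2 - A1) / N) * X ^ 2 + ((2 * N - 1) * T / (3 * N)) * X + (N + 1) / (6 * N))
    + (0 * Y - A2 * (A * (-((2 * N - 1) / N) * X ^ 2 * Y ^ 2
        + ((2 * A1 - (3 * N - 2) * A2) / N) * X * Y - ((2 * N - 1) / (3 * N)) * T * Y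
        + A2 * (A1 - (N - 1) * A2) / N))) / Y ^ 2
    = A * ((X + A2 / Y) ^ 3 * Y + ((N * (-A2) - (A1 + A2 - N * A2)) / N) * (X + A2 / Y) ^ 2
      + ((2 * N - 1) * T / (3 * N)) * (X + A2 / Y) + (N + 1) / (6 * N)) := by
  obtain ⟨u, rfl⟩ : ∃ u, A2 = u * Y := ⟨A2 / Y, (div_mul_cancel₀ _ hY).symm⟩
  obtain ⟨m, hm⟩ : ∃ m, m = N⁻¹ := ⟨N⁻¹, rfl⟩
  have hNm : N * m = 1 := by rw [hm, mul_inv_cancel₀ hN]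
  rw [show ∀ v : ℂ, v * Y / Y = v from fun v => mul_div_cancel_right₀ v hY]
  refine mul_right_cancel₀ (pow_ne_zero 2 hY) ?_
  rw [add_mul, div_mul_cancel₀ _ (pow_ne_zero 2 hY)]
  have e1 : ∀ z : ℂ, z / N = z * m := by intro z; rw [hm, div_eq_mul_inv]
  have e2 : ∀ z : ℂ, z / (3 * N) = z * m / 3 := by
    intro z; rw [hm]; field_simp
  have e3 : ∀ z : ℂ, z / (6 * N) = z * m / 6 := by
    intro z; rw [hm]; field_simp
  simp only [e1, e2, e3]
  linear_combination (A * Y ^ 3 * (3 * X * u ^ 2 + 3 * X ^ 2 * u + u ^ 3)) * hNm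

set_option maxHeartbeats 1000000 in
private lemma piv_aux2 (N A1 A2 T X Y A : ℂ) (hN : N ≠ 0) (hY : Y ≠ 0) :
    A * (-((2 * N - 1) / N) * X ^ 2 * Y ^ 2 + ((2 * A1 - (3 * N - 2) * A2) / N) * X * Y
      - ((2 * N - 1) / (3 * N)) * T * Y + A2 * (A1 - (N - 1) * A2) / N)
    = A * (-((2 * N - 1) / N) * (X + A2 / Y) ^ 2 * Y ^ 2
      + ((2 * (A1 + A2 - N * A2) - (3 * N - 2) * (-A2)) / N) * (X + A2 / Y) * Y
      - ((2 * N - 1) / (3 * N)) * T * Y + (-A2) * ((A1 + A2 - N * A2) - (N - 1) * (-A2)) / N) := by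
  obtain ⟨u, rfl⟩ : ∃ u, A2 = u * Y := ⟨A2 / Y, (div_mul_cancel₀ _ hY).symm⟩
  rw [show ∀ v : ℂ, v * Y / Y = v from fun v => mul_div_cancel_right₀ v hY]
  field_simp
  ring_nf

/-- Birational symmetry `s` of the generalized Painlevé IV system:
`(x, y) ↦ (x + α2/y, y)` with parameters `(n1,n2; α1+α2−n1α2, −α2)`. -/
theorem piv_symmetry_s (n1 n2 a1 a2 : ℂ) (hn1 : n1 ≠ 0)
    (hrel : 2 * n1 * n2 - 3 * n1 - n2 - 3 = 0)
    (a : ℂ → ℂ) (U : Set ℂ) (hU : IsOpen U)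
    (x y : ℂ → ℂ) (hy : ∀ t ∈ U, y t ≠ 0)
    (hxy : PIVSystem n1 n2 a1 a2 a U x y) :
    PIVSystem n1 n2 (a1 + a2 - n1 * a2) (-a2) a U (fun t => x t + a2 / y t) y := by
  obtain ⟨hx, hyd, heq⟩ := hxy
  refine ⟨hx.add ((differentiableOn_const a2).div hyd hy), hyd, ?_⟩
  intro t ht
  have hxt : DifferentiableAt ℂ x t := hx.differentiableAt (hU.mem_nhds ht)
  have hyt : DifferentiableAt ℂ y t := hyd.differentiableAt (hU.mem_nhds ht)
  have hyne : y t ≠ 0 := hy t ht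
  obtain ⟨h1, h2⟩ := heq t ht
  constructor
  · have hd : deriv (fun s => x s + a2 / y s) t
        = deriv x t + (deriv (fun _ : ℂ => a2) t * y t - a2 * deriv y t) / y t ^ 2 := by
      rw [deriv_fun_add (g := fun s => a2 / y s) hxt ((differentiableAt_const a2).div hyt hyne),
        deriv_fun_div (differentiableAt_const a2) hyt hyne]
    simp only
    rw [hd, deriv_const, h1, h2]
    exact piv_aux1 n1 a1 a2 t (x t) (y t) (a t) hn1 hyne
  · simp only
    rw [h2]
    exact piv_aux2 n1 a1 a2 t (x t) (y t) (a t) hn1 hyne
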